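/- arXiv:cs/0611088 — 5 statements merged into one kernel-verified Lean document; each statement's English description precedes it below -/
import Mathlib

section
/- Let (M,d) be a metric space and let x, y, z, r ∈ M be pairwise distinct points. Define the seven isolation indices a = α_{{x},{y,z,r}}, b = α_{{y},{x,z,r}}, c = α_{{z},{x,y,r}}, t = α_{{r},{x,y,z}}, e = α_{{x,y},{z,r}}, f = α_{{x,z},{y,r}}, g = α_{{x,r},{y,z}}. Then the six identities hold: d(x,y) = a+b+f+g, d(x,z) = a+c+e+g, d(y,z) = b+c+e+f, d(x,r) = a+t+e+f, d(y,r) = b+t+e+g, d(z,r) = c+t+f+g. (Every metric on four points is totally decomposable: each distance is the sum of the isolation indices of the splits separating the two points.) -/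
/-- The Bandelt–Dress isolation index of a pair of nonempty subsets `A, B`
of a metric space. -/
noncomputable def isolationIndex {M : Type*} [MetricSpace M] (A B : Set M) : ℝ :=
  (1 / 2) * sInf {v : ℝ | ∃ a ∈ A, ∃ a' ∈ A, ∃ b ∈ B, ∃ b' ∈ B,
    v = max 0 (max (dist a b + dist a' b' - dist a a' - dist b b')
                   (dist a b' + dist a' b - dist a a' - dist b b'))}

private lemma isolationIndex_eq {M : Type*} [MetricSpace M] {A B : Set M} {V : ℝ}
    (hmem : ∃ a ∈ A, ∃ a' ∈ A, ∃ b ∈ B, ∃ b' ∈ B,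
      V = max 0 (max (dist a b + dist a' b' - dist a a' - dist b b')
                     (dist a b' + dist a' b - dist a a' - dist b b')))
    (hlb : ∀ a ∈ A, ∀ a' ∈ A, ∀ b ∈ B, ∀ b' ∈ B,
      V ≤ max 0 (max (dist a b + dist a' b' - dist a a' - dist b b')
                     (dist a b' + dist a' b - dist a a' - dist b b'))) :
    isolationIndex A B = (1 / 2) * V := by
  unfold isolationIndex
  congr 1
  refine IsLeast.csInf_eq ⟨hmem, ?_⟩
  rintro v ⟨a, ha, a', ha', b, hb, b', hb', rfl⟩
  exact hlb a ha a' ha' b hb b' hb'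

set_option maxHeartbeats 4000000 in
private lemma four_point_key {M : Type*} [MetricSpace M] (x y z r : M)
    (h1 : dist x y + dist z r ≤ dist x r + dist y z)
    (h2 : dist x z + dist y r ≤ dist x r + dist y z) :
    dist x y = isolationIndex ({x} : Set M) {y, z, r}
             + isolationIndex ({y} : Set M) {x, z, r}
             + isolationIndex ({x, z} : Set M) {y, r}
             + isolationIndex ({x, r} : Set M) {y, z} ∧
    dist x z = isolationIndex ({x} : Set M) {y, z, r}
             + isolationIndex ({z} : Set M) {x, y, r}
             + isolationIndex ({x, y} : Set M) {z, r}
             + isolationIndex ({x, r} : Set M) {y, z} ∧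
    dist y z = isolationIndex ({y} : Set M) {x, z, r}
             + isolationIndex ({z} : Set M) {x, y, r}
             + isolationIndex ({x, y} : Set M) {z, r}
             + isolationIndex ({x, z} : Set M) {y, r} ∧
    dist x r = isolationIndex ({x} : Set M) {y, z, r}
             + isolationIndex ({r} : Set M) {x, y, z}
             + isolationIndex ({x, y} : Set M) {z, r}
             + isolationIndex ({x, z} : Set M) {y, r} ∧
    dist y r = isolationIndex ({y} : Set M) {x, z, r}
             + isolationIndex ({r} : Set M) {x, y, z}
             + isolationIndex ({x, y} : Set M) {z, r}
             + isolationIndex ({x, r} : Set M) {y, z} ∧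
    dist z r = isolationIndex ({z} : Set M) {x, y, r}
             + isolationIndex ({r} : Set M) {x, y, z}
             + isolationIndex ({x, z} : Set M) {y, r}
             + isolationIndex ({x, r} : Set M) {y, z} := by
  have c1 := dist_comm x y
  have c2 := dist_comm x z
  have c3 := dist_comm x r
  have c4 := dist_comm y z
  have c5 := dist_comm y r
  have c6 := dist_comm z r
  have s1 := dist_self x
  have s2 := dist_self y
  have s3 := dist_self z
  have s4 := dist_self r
  have t1 := dist_triangle x y z
  have t2 := dist_triangle y x z
  have t3 := dist_triangle x z y
  have t4 := dist_triangle x y r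
  have t5 := dist_triangle y x r
  have t6 := dist_triangle x r y
  have t7 := dist_triangle x z r
  have t8 := dist_triangle z x r
  have t9 := dist_triangle x r z
  have t10 := dist_triangle y z r
  have t11 := dist_triangle z y r
  have t12 := dist_triangle y r z
  -- singleton split at x
  have ha : isolationIndex ({x} : Set M) {y, z, r}
      = (1 / 2) * (dist x y + dist x z - dist y z) := by
    apply isolationIndex_eq
    · refine ⟨x, by simp, x, by simp, y, by simp, z, by simp, ?_⟩
      rw [max_eq_right, max_eq_left] <;>
        first | linarith | exact le_max_of_le_left (by linarith)
    · intro p1 hp1 p2 hp2 q1 hq1 q2 hq2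
      simp only [Set.mem_singleton_iff, Set.mem_insert_iff] at hp1 hp2 hq1 hq2
      subst hp1; subst hp2
      rcases hq1 with rfl | rfl | rfl <;> rcases hq2 with rfl | rfl | rfl <;>
        (rw [le_max_iff, le_max_iff];
         first | (right; left; linarith) | (right; right; linarith) | (left; linarith))
  -- singleton split at y
  have hb : isolationIndex ({y} : Set M) {x, z, r}
      = (1 / 2) * (dist x y + dist y r - dist x r) := by
    apply isolationIndex_eq
    · refine ⟨y, by simp, y, by simp, x, by simp, r, by simp, ?_⟩
      rw [max_eq_right, max_eq_left] <;>
        first | linarith | exact le_max_of_le_left (by linarith)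
    · intro p1 hp1 p2 hp2 q1 hq1 q2 hq2
      simp only [Set.mem_singleton_iff, Set.mem_insert_iff] at hp1 hp2 hq1 hq2
      subst hp1; subst hp2
      rcases hq1 with rfl | rfl | rfl <;> rcases hq2 with rfl | rfl | rfl <;>
        (rw [le_max_iff, le_max_iff];
         first | (right; left; linarith) | (right; right; linarith) | (left; linarith))
  -- singleton split at z
  have hc : isolationIndex ({z} : Set M) {x, y, r}
      = (1 / 2) * (dist x z + dist z r - dist x r) := by
    apply isolationIndex_eq
    · refine ⟨z, by simp, z, by simp, x, by simp, r, by simp, ?_⟩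
      rw [max_eq_right, max_eq_left] <;>
        first | linarith | exact le_max_of_le_left (by linarith)
    · intro p1 hp1 p2 hp2 q1 hq1 q2 hq2
      simp only [Set.mem_singleton_iff, Set.mem_insert_iff] at hp1 hp2 hq1 hq2
      subst hp1; subst hp2
      rcases hq1 with rfl | rfl | rfl <;> rcases hq2 with rfl | rfl | rfl <;>
        (rw [le_max_iff, le_max_iff];
         first | (right; left; linarith) | (right; right; linarith) | (left; linarith))
  -- singleton split at r
  have ht : isolationIndex ({r} : Set M) {x, y, z}
      = (1 / 2) * (dist y r + dist z r - dist y z) := by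
    apply isolationIndex_eq
    · refine ⟨r, by simp, r, by simp, y, by simp, z, by simp, ?_⟩
      rw [max_eq_right, max_eq_left] <;>
        first | linarith | exact le_max_of_le_left (by linarith)
    · intro p1 hp1 p2 hp2 q1 hq1 q2 hq2
      simp only [Set.mem_singleton_iff, Set.mem_insert_iff] at hp1 hp2 hq1 hq2
      subst hp1; subst hp2
      rcases hq1 with rfl | rfl | rfl <;> rcases hq2 with rfl | rfl | rfl <;>
        (rw [le_max_iff, le_max_iff];
         first | (right; left; linarith) | (right; right; linarith) | (left; linarith))
  -- split {x,y} | {z,r}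
  have he : isolationIndex ({x, y} : Set M) {z, r}
      = (1 / 2) * (dist x r + dist y z - dist x y - dist z r) := by
    apply isolationIndex_eq
    · refine ⟨x, by simp, y, by simp, r, by simp, z, by simp, ?_⟩
      rw [max_eq_right, max_eq_left] <;>
        first | linarith | exact le_max_of_le_left (by linarith)
    · intro p1 hp1 p2 hp2 q1 hq1 q2 hq2
      simp only [Set.mem_singleton_iff, Set.mem_insert_iff] at hp1 hp2 hq1 hq2
      rcases hp1 with rfl | rfl <;> rcases hp2 with rfl | rfl <;>
        rcases hq1 with rfl | rfl <;> rcases hq2 with rfl | rfl <;>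
        (rw [le_max_iff, le_max_iff];
         first | (right; left; linarith) | (right; right; linarith) | (left; linarith))
  -- split {x,z} | {y,r}
  have hf : isolationIndex ({x, z} : Set M) {y, r}
      = (1 / 2) * (dist x r + dist y z - dist x z - dist y r) := by
    apply isolationIndex_eq
    · refine ⟨x, by simp, z, by simp, r, by simp, y, by simp, ?_⟩
      rw [max_eq_right, max_eq_left] <;>
        first | linarith | exact le_max_of_le_left (by linarith)
    · intro p1 hp1 p2 hp2 q1 hq1 q2 hq2
      simp only [Set.mem_singleton_iff, Set.mem_insert_iff] at hp1 hp2 hq1 hq2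
      rcases hp1 with rfl | rfl <;> rcases hp2 with rfl | rfl <;>
        rcases hq1 with rfl | rfl <;> rcases hq2 with rfl | rfl <;>
        (rw [le_max_iff, le_max_iff];
         first | (right; left; linarith) | (right; right; linarith) | (left; linarith))
  -- split {x,r} | {y,z}
  have hg : isolationIndex ({x, r} : Set M) {y, z} = (1 / 2) * 0 := by
    apply isolationIndex_eq
    · refine ⟨x, by simp, r, by simp, y, by simp, z, by simp, ?_⟩
      rw [max_eq_left]
      exact max_le (by linarith) (by linarith)
    · intro p1 hp1 p2 hp2 q1 hq1 q2 hq2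
      exact le_max_left _ _
  refine ⟨by linarith, by linarith, by linarith, by linarith, by linarith, by linarith⟩

/-- Every metric on four points is totally decomposable: for pairwise distinct
points `x, y, z, r`, each distance is the sum of the isolation indices of the
splits separating the two points. -/
theorem four_point_totally_decomposable {M : Type*} [MetricSpace M]
    (x y z r : M) (hxy : x ≠ y) (hxz : x ≠ z) (hxr : x ≠ r)
    (hyz : y ≠ z) (hyr : y ≠ r) (hzr : z ≠ r) :
    dist x y = isolationIndex ({x} : Set M) {y, z, r}
             + isolationIndex ({y} : Set M) {x, z, r}
             + isolationIndex ({x, z} : Set M) {y, r}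
             + isolationIndex ({x, r} : Set M) {y, z} ∧
    dist x z = isolationIndex ({x} : Set M) {y, z, r}
             + isolationIndex ({z} : Set M) {x, y, r}
             + isolationIndex ({x, y} : Set M) {z, r}
             + isolationIndex ({x, r} : Set M) {y, z} ∧
    dist y z = isolationIndex ({y} : Set M) {x, z, r}
             + isolationIndex ({z} : Set M) {x, y, r}
             + isolationIndex ({x, y} : Set M) {z, r}
             + isolationIndex ({x, z} : Set M) {y, r} ∧
    dist x r = isolationIndex ({x} : Set M) {y, z, r}
             + isolationIndex ({r} : Set M) {x, y, z}
             + isolationIndex ({x, y} : Set M) {z, r}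
             + isolationIndex ({x, z} : Set M) {y, r} ∧
    dist y r = isolationIndex ({y} : Set M) {x, z, r}
             + isolationIndex ({r} : Set M) {x, y, z}
             + isolationIndex ({x, y} : Set M) {z, r}
             + isolationIndex ({x, r} : Set M) {y, z} ∧
    dist z r = isolationIndex ({z} : Set M) {x, y, r}
             + isolationIndex ({r} : Set M) {x, y, z}
             + isolationIndex ({x, z} : Set M) {y, r}
             + isolationIndex ({x, r} : Set M) {y, z} := by
  have c6 := dist_comm z r
  have c5 := dist_comm y r
  have c4 := dist_comm y z
  rcases le_total (dist x y + dist z r) (dist x r + dist y z) with h13 | h13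
  · rcases le_total (dist x z + dist y r) (dist x r + dist y z) with h23 | h23
    · -- β3 maximal
      exact four_point_key x y z r h13 h23
    · -- β2 maximal : apply to (x, y, r, z)
      have K := four_point_key x y r z (by linarith) (by linarith)
      have e1 : ({y, r, z} : Set M) = {y, z, r} := by
        ext u; simp only [Set.mem_insert_iff, Set.mem_singleton_iff]; tauto
      have e2 : ({x, r, z} : Set M) = {x, z, r} := by
        ext u; simp only [Set.mem_insert_iff, Set.mem_singleton_iff]; tauto
      have e3 : ({r, z} : Set M) = {z, r} := by
        ext u; simp only [Set.mem_insert_iff, Set.mem_singleton_iff]; tauto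
      rw [e1, e2, e3] at K
      obtain ⟨k1, k2, k3, k4, k5, k6⟩ := K
      exact ⟨by linarith, by linarith, by linarith, by linarith, by linarith, by linarith⟩
  · rcases le_total (dist x z + dist y r) (dist x y + dist z r) with h12 | h12
    · -- β1 maximal : apply to (x, r, z, y)
      have K := four_point_key x r z y (by linarith) (by linarith)
      have e1 : ({r, z, y} : Set M) = {y, z, r} := by
        ext u; simp only [Set.mem_insert_iff, Set.mem_singleton_iff]; tauto
      have e2 : ({x, z, y} : Set M) = {x, y, z} := by
        ext u; simp only [Set.mem_insert_iff, Set.mem_singleton_iff]; tauto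
      have e3 : ({x, r, y} : Set M) = {x, y, r} := by
        ext u; simp only [Set.mem_insert_iff, Set.mem_singleton_iff]; tauto
      have e4 : ({x, r, z} : Set M) = {x, z, r} := by
        ext u; simp only [Set.mem_insert_iff, Set.mem_singleton_iff]; tauto
      have e5 : ({z, y} : Set M) = {y, z} := by
        ext u; simp only [Set.mem_insert_iff, Set.mem_singleton_iff]; tauto
      have e6 : ({r, y} : Set M) = {y, r} := by
        ext u; simp only [Set.mem_insert_iff, Set.mem_singleton_iff]; tauto
      have e7 : ({r, z} : Set M) = {z, r} := by
        ext u; simp only [Set.mem_insert_iff, Set.mem_singleton_iff]; tauto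
      rw [e1, e2, e3, e4, e5, e6, e7] at K
      obtain ⟨k1, k2, k3, k4, k5, k6⟩ := K
      exact ⟨by linarith, by linarith, by linarith, by linarith, by linarith, by linarith⟩
    · -- β2 maximal : apply to (x, y, r, z)
      have K := four_point_key x y r z (by linarith) (by linarith)
      have e1 : ({y, r, z} : Set M) = {y, z, r} := by
        ext u; simp only [Set.mem_insert_iff, Set.mem_singleton_iff]; tauto
      have e2 : ({x, r, z} : Set M) = {x, z, r} := by
        ext u; simp only [Set.mem_insert_iff, Set.mem_singleton_iff]; tauto
      have e3 : ({r, z} : Set M) = {z, r} := by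
        ext u; simp only [Set.mem_insert_iff, Set.mem_singleton_iff]; tauto
      rw [e1, e2, e3] at K
      obtain ⟨k1, k2, k3, k4, k5, k6⟩ := K
      exact ⟨by linarith, by linarith, by linarith, by linarith, by linarith, by linarith⟩
end

section
/- Let (M,d) be a metric space and let x, y, z, r ∈ M be pairwise distinct points. Then at least one of the three isolation indices α_{{x,y},{z,r}}, α_{{x,z},{y,r}}, α_{{x,r},{y,z}} is equal to zero; equivalently, their product is zero. -/
lemma isolationIndex_eq_zero_of_max {M : Type*} [MetricSpace M] (p q u v : M)
    (h1 : dist p u + dist q v ≤ dist p q + dist u v)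
    (h2 : dist p v + dist q u ≤ dist p q + dist u v) :
    isolationIndex ({p, q} : Set M) {u, v} = 0 := by
  unfold isolationIndex
  have hmem : (0 : ℝ) ∈ {v_1 : ℝ | ∃ a ∈ ({p, q} : Set M), ∃ a' ∈ ({p, q} : Set M),
      ∃ b ∈ ({u, v} : Set M), ∃ b' ∈ ({u, v} : Set M),
      v_1 = max 0 (max (dist a b + dist a' b' - dist a a' - dist b b')
                   (dist a b' + dist a' b - dist a a' - dist b b'))} := by
    refine ⟨p, by simp, q, by simp, u, by simp, v, by simp, ?_⟩
    symm
    apply max_eq_left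
    apply max_le <;> linarith
  have hbdd : BddBelow {v_1 : ℝ | ∃ a ∈ ({p, q} : Set M), ∃ a' ∈ ({p, q} : Set M),
      ∃ b ∈ ({u, v} : Set M), ∃ b' ∈ ({u, v} : Set M),
      v_1 = max 0 (max (dist a b + dist a' b' - dist a a' - dist b b')
                   (dist a b' + dist a' b - dist a a' - dist b b'))} := by
    refine ⟨0, fun w hw => ?_⟩
    obtain ⟨a, _, a', _, b, _, b', _, hw⟩ := hw
    rw [hw]; exact le_max_left _ _
  have : sInf {v_1 : ℝ | ∃ a ∈ ({p, q} : Set M), ∃ a' ∈ ({p, q} : Set M),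
      ∃ b ∈ ({u, v} : Set M), ∃ b' ∈ ({u, v} : Set M),
      v_1 = max 0 (max (dist a b + dist a' b' - dist a a' - dist b b')
                   (dist a b' + dist a' b - dist a a' - dist b b'))} = 0 := by
    refine le_antisymm (csInf_le hbdd hmem) (le_csInf ⟨0, hmem⟩ fun w hw => ?_)
    obtain ⟨a, _, a', _, b, _, b', _, hw⟩ := hw
    rw [hw]; exact le_max_left _ _
  rw [this, mul_zero]

/-- For four pairwise distinct points `x, y, z, r` of a metric space, at least
one of the isolation indices of the three pair-pair splits is zero. -/
theorem isolationIndex_pair_splits_not_all_pos {M : Type*} [MetricSpace M]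
    (x y z r : M) (hxy : x ≠ y) (hxz : x ≠ z) (hxr : x ≠ r)
    (hyz : y ≠ z) (hyr : y ≠ r) (hzr : z ≠ r) :
    isolationIndex ({x, y} : Set M) {z, r} = 0 ∨
    isolationIndex ({x, z} : Set M) {y, r} = 0 ∨
    isolationIndex ({x, r} : Set M) {y, z} = 0 := by
  have c1 := dist_comm z r
  have c2 := dist_comm y r
  have c3 := dist_comm y z
  have c4 := dist_comm r y
  have c5 := dist_comm r z
  rcases le_total (dist x z + dist y r) (dist x y + dist z r) with h1 | h1
  · rcases le_total (dist x r + dist y z) (dist x y + dist z r) with h2 | h2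
    · exact Or.inl (isolationIndex_eq_zero_of_max x y z r (by linarith) (by linarith))
    · exact Or.inr (Or.inr (isolationIndex_eq_zero_of_max x r y z (by linarith)
        (by linarith)))
  · rcases le_total (dist x r + dist y z) (dist x z + dist y r) with h2 | h2
    · exact Or.inr (Or.inl (isolationIndex_eq_zero_of_max x z y r (by linarith)
        (by linarith)))
    · exact Or.inr (Or.inr (isolationIndex_eq_zero_of_max x r y z (by linarith)
        (by linarith)))
end

section
/- Let (X,d) be a metric space, let f ∈ P(X) be minimal with respect to the pointwise partial order (i.e., f ∈ T(X)), and let x ∈ X. Then sup_{z ∈ X} |f(z) − d(x,z)| = f(x); that is, in the tight span with the sup-norm metric, the distance from the canonically embedded point h_x (where h_x(z) = d(x,z)) to f equals f(x). -/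
/-- `P(X)`: the set of functions `f : X → ℝ` with `f x + f y ≥ d(x,y)` for all `x, y`. -/
def Pspace (X : Type*) [MetricSpace X] : Set (X → ℝ) :=
  {f | ∀ x y : X, f x + f y ≥ dist x y}

/-- The tight span `T(X)`: the members of `P(X)` that are minimal with respect to
the pointwise partial order. -/
def tightSpan (X : Type*) [MetricSpace X] : Set (X → ℝ) :=
  {f | f ∈ Pspace X ∧ ∀ g ∈ Pspace X, (∀ x, g x ≤ f x) → g = f}

/-- For `f` in the tight span and `x ∈ X`, the sup-norm distance from the
canonically embedded point `h_x = d(x,·)` to `f` equals `f(x)`: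
`sup_{z ∈ X} |f(z) − d(x,z)| = f(x)`. -/
theorem tightSpan_dist_to_embedded_point {X : Type*} [MetricSpace X] {f : X → ℝ}
    (hf : f ∈ tightSpan X) (x : X) :
    (⨆ z : X, |f z - dist x z|) = f x := by
  have : Nonempty X := ⟨x⟩
  obtain ⟨hP, hmin⟩ := hf
  have hfx0 : 0 ≤ f x := by
    have := hP x x; simp only [dist_self] at this; linarith
  have hub : ∀ z, |f z - dist x z| ≤ f x := by
    intro z
    have key : f z ≤ f x + dist x z := by
      set g : X → ℝ := fun y => min (f y) (f x + dist x y) with hg_def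
      have hg : g ∈ Pspace X := by
        intro a b
        have t : dist a b ≤ dist a x + dist x b := dist_triangle a x b
        have hax : f a + f x ≥ dist a x := hP a x
        have hxb : f x + f b ≥ dist x b := hP x b
        have hsx : dist x a = dist a x := dist_comm x a
        simp only [hg_def, ge_iff_le]
        rcases min_cases (f a) (f x + dist x a) with ⟨h1, _⟩ | ⟨h1, _⟩ <;>
          rcases min_cases (f b) (f x + dist x b) with ⟨h2, _⟩ | ⟨h2, _⟩ <;>
          rw [h1, h2] <;> nlinarith [hP a b, dist_nonneg (x := x) (y := a)]
      have heq := hmin g hg (fun y => min_le_left _ _)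
      have := congrFun heq z
      simp only [hg_def] at this
      calc f z = min (f z) (f x + dist x z) := this.symm
        _ ≤ f x + dist x z := min_le_right _ _
    have := hP x z
    rw [abs_sub_le_iff]
    constructor <;> linarith
  apply le_antisymm
  · exact ciSup_le hub
  · have hx : |f x - dist x x| = f x := by
      simp [dist_self, abs_of_nonneg hfx0]
    calc f x = |f x - dist x x| := hx.symm
      _ ≤ ⨆ z : X, |f z - dist x z| :=
        le_ciSup ⟨f x, Set.forall_mem_range.mpr hub⟩ x
end

section
/- The space ℝ^n with the sup-norm (L∞) metric is an injective metric space: for every metric space Y and every isometric embedding ι : (Fin n → ℝ, sup metric) → Y, there exists a 1-Lipschitz map ρ : Y → (Fin n → ℝ) such that ρ(ι(p)) = p for every p; here the sup metric is d(p,q) = max_{1≤i≤n} |p_i − q_i|. -/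
/-- `ℝ^n` with the sup-norm (`L∞`) metric — i.e. `Fin n → ℝ` with the product
metric `d(p,q) = max_i |p_i − q_i|` — is an injective metric space: for every
metric space `Y` and every isometric embedding `ι : (Fin n → ℝ) → Y` there is a
nonexpansive retraction `ρ : Y → (Fin n → ℝ)` with `ρ ∘ ι = id`. -/
theorem linf_injective (n : ℕ) (Y : Type*) [MetricSpace Y]
    (ι : (Fin n → ℝ) → Y) (hι : Isometry ι) :
    ∃ ρ : Y → (Fin n → ℝ), LipschitzWith 1 ρ ∧ ∀ p, ρ (ι p) = p := by
  set f : Y → Fin n → ℝ := fun y i => ⨅ p : Fin n → ℝ, (p i + dist y (ι p)) with hf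
  have hbdd : ∀ (y : Y) (i : Fin n),
      BddBelow (Set.range fun p : Fin n → ℝ => p i + dist y (ι p)) := by
    intro y i
    refine ⟨-dist y (ι 0), ?_⟩
    rintro _ ⟨p, rfl⟩
    show -dist y (ι 0) ≤ p i + dist y (ι p)
    have h1 : dist (p i) ((0 : Fin n → ℝ) i) ≤ dist p 0 := dist_le_pi_dist p 0 i
    have h2 : dist (ι p) (ι 0) ≤ dist y (ι p) + dist y (ι 0) := dist_triangle_left _ _ _
    rw [hι.dist_eq] at h2
    have h3 : -(p i) ≤ dist p 0 := by
      have := neg_abs_le (p i)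
      simp only [Pi.zero_apply, Real.dist_eq, sub_zero] at h1
      linarith
    linarith
  have hkey : ∀ (u v : Y) (i : Fin n), f u i ≤ f v i + dist u v := by
    intro u v i
    have h : f u i - dist u v ≤ f v i := le_ciInf fun p => by
      have h1 := ciInf_le (hbdd u i) p
      have h2 := dist_triangle u v (ι p)
      simp only [hf] at h1 ⊢
      linarith
    linarith
  have hlip : ∀ (u v : Y) (i : Fin n), f u i ≤ f v i + dist u v := hkey
  refine ⟨f, ?_, ?_⟩
  · rw [lipschitzWith_iff_dist_le_mul]
    intro u v
    rw [NNReal.coe_one, one_mul]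
    rw [dist_pi_le_iff dist_nonneg]
    intro i
    rw [Real.dist_eq, abs_sub_le_iff]
    constructor
    · have := hkey u v i; linarith
    · have := hkey v u i; rw [dist_comm] at this; linarith
  · intro q
    funext i
    refine le_antisymm ?_ ?_
    · have := ciInf_le (hbdd (ι q) i) q
      simpa using this
    · refine le_ciInf fun p => ?_
      have h1 : dist (q i) (p i) ≤ dist q p := dist_le_pi_dist q p i
      have h2 : dist (ι q) (ι p) = dist q p := hι.dist_eq q p
      rw [Real.dist_eq] at h1
      have := abs_sub_abs_le_abs_sub (q i) (p i)
      have h3 : q i - p i ≤ |q i - p i| := le_abs_self _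
      linarith
end

section
/- No Euclidean space of dimension more than one is injective: for every n ≥ 2 there exist a metric space Y and an isometric embedding ι : E → Y, where E is ℝ^n with the Euclidean (L2) metric, such that no 1-Lipschitz map ρ : Y → E satisfies ρ(ι(p)) = p for every p ∈ E. -/
open EuclideanSpace

/-- Distance on `Option E` extending the metric on `E` by a new point at
distance `f p` from each `p : E`. -/
noncomputable def optDist {E : Type} [MetricSpace E] (f : E → ℝ) :
    Option E → Option E → ℝ
  | none, none => 0
  | none, some p => f p
  | some p, none => f p
  | some p, some q => dist p q

/-- The one-point metric extension determined by an admissible function `f`. -/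
noncomputable def optMetric {E : Type} [MetricSpace E] (f : E → ℝ)
    (hpos : ∀ p, 0 < f p)
    (hlip : ∀ p q, f p ≤ f q + dist p q)
    (hsum : ∀ p q, dist p q ≤ f p + f q) : MetricSpace (Option E) where
  dist := optDist f
  dist_self := by rintro (_ | p) <;> simp [optDist]
  dist_comm := by
    rintro (_ | p) (_ | q) <;> simp [optDist, dist_comm]
  dist_triangle := by
    rintro (_ | p) (_ | q) (_ | r) <;> simp only [optDist]
    · simp
    · simp
    · linarith [hpos q]
    · linarith [hlip r q, dist_comm r q]
    · simp
    · exact hsum p r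
    · linarith [hlip p q]
    · exact dist_triangle p q r
  eq_of_dist_eq_zero := by
    rintro (_ | p) (_ | q) h <;> simp only [optDist] at h
    · rfl
    · exact absurd h (ne_of_gt (hpos q))
    · exact absurd h (ne_of_gt (hpos p))
    · exact congrArg some (eq_of_dist_eq_zero h)

/-- No Euclidean space of dimension at least two is injective: for every
`n ≥ 2` there exist a metric space `Y` and an isometric embedding
`ι : ℝ^n_{L2} → Y` that admits no nonexpansive retraction, i.e. no 1-Lipschitz
map `ρ : Y → ℝ^n_{L2}` with `ρ (ι p) = p` for all `p`. -/
theorem euclidean_not_injective (n : ℕ) (hn : 2 ≤ n) :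
    ∃ (Y : Type) (m : MetricSpace Y) (ι : EuclideanSpace ℝ (Fin n) → Y),
      letI := m
      Isometry ι ∧
        ¬∃ ρ : Y → EuclideanSpace ℝ (Fin n),
            LipschitzWith 1 ρ ∧ ∀ p, ρ (ι p) = p := by
  classical
  set E := EuclideanSpace ℝ (Fin n)
  have h01 : (⟨0, by omega⟩ : Fin n) ≠ ⟨1, by omega⟩ := by
    intro h; simpa using congrArg Fin.val h
  set i0 : Fin n := ⟨0, by omega⟩
  set i1 : Fin n := ⟨1, by omega⟩
  set a : E := 0 with ha
  set b : E := EuclideanSpace.single i0 (1 : ℝ) with hb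
  set c : E := EuclideanSpace.single i0 (1/2 : ℝ)
    + EuclideanSpace.single i1 (Real.sqrt 3 / 2) with hc
  -- norms of combinations of orthogonal singles
  have hnorm2 : ∀ (x y : ℝ),
      ‖EuclideanSpace.single i0 x + EuclideanSpace.single i1 y‖ ^ 2 = x ^ 2 + y ^ 2 := by
    intro x y
    have horth : (inner ℝ (EuclideanSpace.single i0 x) (EuclideanSpace.single i1 y) : ℝ) = 0 := by
      rw [EuclideanSpace.inner_single_left]
      simp [EuclideanSpace.single_apply, h01]
    rw [norm_add_sq_real, horth]
    simp [EuclideanSpace.norm_single, sq_abs]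
  have h3 : Real.sqrt 3 ^ 2 = 3 := Real.sq_sqrt (by norm_num)
  have hab : dist a b = 1 := by
    rw [ha, hb, dist_eq_norm, zero_sub, norm_neg, EuclideanSpace.norm_single]
    norm_num
  have hac : dist a c = 1 := by
    have : ‖c‖ ^ 2 = 1 := by
      rw [hc, hnorm2]
      rw [div_pow, div_pow, h3]; norm_num
    have hn : ‖c‖ = 1 := by
      nlinarith [norm_nonneg c]
    rw [ha, dist_eq_norm, zero_sub, norm_neg, hn]
  have hbc : dist b c = 1 := by
    have hbc' : b - c = EuclideanSpace.single i0 (1/2 : ℝ)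
        + EuclideanSpace.single i1 (-(Real.sqrt 3 / 2)) := by
      rw [hb, hc]
      have h1 : EuclideanSpace.single i0 (1 : ℝ) = EuclideanSpace.single i0 (1/2 : ℝ)
          + EuclideanSpace.single i0 (1/2 : ℝ) := by
        ext j; simp [EuclideanSpace.single_apply]; split <;> norm_num
      have h2 : EuclideanSpace.single i1 (-(Real.sqrt 3 / 2)) =
          - EuclideanSpace.single i1 (Real.sqrt 3 / 2) := by
        ext j; simp only [EuclideanSpace.single_apply, PiLp.neg_apply]
        split <;> norm_num
      rw [h1, h2]
      abel
    have : ‖b - c‖ ^ 2 = 1 := by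
      rw [hbc', hnorm2]
      rw [div_pow, neg_pow, div_pow, h3]; norm_num
    have hn : ‖b - c‖ = 1 := by nlinarith [norm_nonneg (b - c)]
    rw [dist_eq_norm, hn]
  -- the extremal function
  set S : Set E := {a, b, c} with hS
  set f : E → ℝ := fun p => 1/2 + min (dist p a) (min (dist p b) (dist p c)) with hf
  have hfpos : ∀ p, 0 < f p := by
    intro p
    have : (0:ℝ) ≤ min (dist p a) (min (dist p b) (dist p c)) :=
      le_min dist_nonneg (le_min dist_nonneg dist_nonneg)
    simp only [hf]; linarith
  have hflip : ∀ p q, f p ≤ f q + dist p q := by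
    intro p q
    simp only [hf]
    have h1 : min (dist p a) (min (dist p b) (dist p c))
        ≤ min (dist q a) (min (dist q b) (dist q c)) + dist p q := by
      rcases le_total (dist q a) (min (dist q b) (dist q c)) with h | h
      · calc min (dist p a) (min (dist p b) (dist p c)) ≤ dist p a := min_le_left _ _
          _ ≤ dist q a + dist p q := by
              have := dist_triangle p q a; linarith [dist_comm p q]
          _ = min (dist q a) (min (dist q b) (dist q c)) + dist p q := by
              rw [min_eq_left h]
      · rcases le_total (dist q b) (dist q c) with h' | h'
        · calc min (dist p a) (min (dist p b) (dist p c))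
              ≤ dist p b := le_trans (min_le_right _ _) (min_le_left _ _)
            _ ≤ dist q b + dist p q := by
                have := dist_triangle p q b; linarith [dist_comm p q]
            _ = min (dist q a) (min (dist q b) (dist q c)) + dist p q := by
                rw [min_eq_right h, min_eq_left h']
        · calc min (dist p a) (min (dist p b) (dist p c))
              ≤ dist p c := le_trans (min_le_right _ _) (min_le_right _ _)
            _ ≤ dist q c + dist p q := by
                have := dist_triangle p q c; linarith [dist_comm p q]
            _ = min (dist q a) (min (dist q b) (dist q c)) + dist p q := by
                rw [min_eq_right h, min_eq_right h']
    linarith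
  have hdiam : ∀ x ∈ S, ∀ y ∈ S, dist x y ≤ 1 := by
    intro x hx y hy
    simp only [hS, Set.mem_insert_iff, Set.mem_singleton_iff] at hx hy
    rcases hx with rfl | rfl | rfl <;> rcases hy with rfl | rfl | rfl <;>
      first
        | (rw [dist_self]; norm_num)
        | (rw [hab]) | (rw [hac]) | (rw [hbc])
        | (rw [dist_comm, hab]) | (rw [dist_comm, hac]) | (rw [dist_comm, hbc])
  have hfsum : ∀ p q, dist p q ≤ f p + f q := by
    intro p q
    simp only [hf]
    -- pick nearest points in S
    have key : ∀ r : E, ∃ s ∈ S, dist r s = min (dist r a) (min (dist r b) (dist r c)) := by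
      intro r
      rcases le_total (dist r a) (min (dist r b) (dist r c)) with h | h
      · exact ⟨a, by simp [hS], (min_eq_left h).symm⟩
      · rcases le_total (dist r b) (dist r c) with h' | h'
        · exact ⟨b, by simp [hS], by rw [min_eq_right h, min_eq_left h']⟩
        · exact ⟨c, by simp [hS], by rw [min_eq_right h, min_eq_right h']⟩
    obtain ⟨s, hs, hse⟩ := key p
    obtain ⟨t, ht, hte⟩ := key q
    have := dist_triangle p s q
    have h2 := dist_triangle s t q
    have h3 := hdiam s hs t ht
    have := dist_triangle p s t
    have h4 := dist_triangle p t q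
    calc dist p q ≤ dist p s + dist s t + dist t q := by
          have := dist_triangle p s t
          have := dist_triangle p t q
          linarith [dist_comm t q, dist_comm q t]
      _ ≤ dist p s + 1 + dist q t := by rw [dist_comm t q]; linarith
      _ = (1/2 + dist p s) + (1/2 + dist q t) := by ring
      _ = _ := by rw [hse, hte]
  have hfa : f a = 1/2 := by
    simp only [hf]
    rw [dist_self, min_eq_left (le_min dist_nonneg dist_nonneg)]
    norm_num
  have hfb : f b = 1/2 := by
    simp only [hf]
    rw [dist_self, min_eq_left dist_nonneg, min_eq_right dist_nonneg]
    norm_num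
  have hfc : f c = 1/2 := by
    simp only [hf]
    rw [dist_self, min_eq_right dist_nonneg, min_eq_right dist_nonneg]
    norm_num
  letI m : MetricSpace (Option E) := optMetric f hfpos hflip hfsum
  refine ⟨Option E, m, some, ?_, ?_⟩
  · apply Isometry.of_dist_eq
    intro p q
    rfl
  · rintro ⟨ρ, hρ, hret⟩
    set z : E := ρ none with hz
    have hdb : ∀ s : E, dist z s ≤ f s := by
      intro s
      have h1 := hρ.dist_le_mul none (some s)
      simp only [NNReal.coe_one, one_mul] at h1
      rw [hret s] at h1
      exact h1.trans (le_of_eq rfl)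
    have hza : dist z a ≤ 1/2 := hfa ▸ hdb a
    have hzb : dist z b ≤ 1/2 := hfb ▸ hdb b
    have hzc : dist z c ≤ 1/2 := hfc ▸ hdb c
    -- equality forces z to be the midpoint of a and b
    have htr : dist a z + dist z b = 1 := by
      have h1 : dist a b ≤ dist a z + dist z b := dist_triangle a z b
      have := dist_comm z a
      rw [hab] at h1
      linarith
    have hza' : dist a z = 1/2 := by
      have := dist_comm z a; linarith
    have hzb' : dist z b = 1/2 := by linarith
    have hmid : z = midpoint ℝ a b :=
      eq_midpoint_of_dist_eq_half (by rw [hza', hab]) (by rw [hzb', hab])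
    -- but the midpoint is far from c
    have hmc : dist (midpoint ℝ a b) c = Real.sqrt 3 / 2 := by
      have hm : midpoint ℝ a b = EuclideanSpace.single i0 (1/2 : ℝ) := by
        have hsmul : ∀ (r x : ℝ),
            r • (EuclideanSpace.single i0 x : EuclideanSpace ℝ (Fin n))
              = EuclideanSpace.single i0 (r * x) := by
          intro r x
          ext j
          simp [EuclideanSpace.single_apply, mul_ite]
        rw [ha, hb, midpoint_eq_smul_add, zero_add, invOf_eq_inv, hsmul]
        norm_num
      rw [hm, hc, dist_eq_norm]
      have : EuclideanSpace.single i0 (1/2 : ℝ)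
          - (EuclideanSpace.single i0 (1/2 : ℝ) + EuclideanSpace.single i1 (Real.sqrt 3 / 2))
          = - EuclideanSpace.single i1 (Real.sqrt 3 / 2) := by abel
      rw [this, norm_neg, EuclideanSpace.norm_single]
      rw [Real.norm_eq_abs, abs_of_nonneg (by positivity)]
    have hsqrt3 : (1 : ℝ) < Real.sqrt 3 := by
      nlinarith [Real.sq_sqrt (show (0:ℝ) ≤ 3 by norm_num),
        Real.sqrt_nonneg 3]
    rw [hmid, hmc] at hzc
    linarith only [hzc, hsqrt3]
end
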